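/- For 0 < α < 1, a twice continuously differentiable function u : [0,T] → ℝ, and uniform grid t_k = kτ with τ = T/N, the L1 approximation D_τ^α u(t_n) = (1/Γ(1-α)) Σ_{k=0}^{n-1} ((u(t_{k+1}) - u(t_k))/τ) ∫_{t_k}^{t_{k+1}} (t_n - s)^{-α} ds satisfies |ᶜD_t^α u(t_n) − D_τ^α u(t_n)| ≤ C τ^{2-α} for a constant C depending only on α, T, and sup |u''|. -/

import Mathlib

open Set MeasureTheory intervalIntegral

lemma l1_aux_lip (T M : ℝ) (hT : 0 < T) (u : ℝ → ℝ)
    (hu : ContDiffOn ℝ 2 u (Set.Icc 0 T))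
    (hb : ∀ s ∈ Set.Icc (0:ℝ) T, |deriv (deriv u) s| ≤ M) :
    ∀ x ∈ Set.Icc (0:ℝ) T, ∀ y ∈ Set.Icc (0:ℝ) T,
      |derivWithin u (Set.Icc 0 T) y - derivWithin u (Set.Icc 0 T) x| ≤ M * |y - x| := by
  set s : Set ℝ := Set.Icc 0 T with hs
  have hsu : UniqueDiffOn ℝ s := uniqueDiffOn_Icc hT
  set g : ℝ → ℝ := derivWithin u s with hg
  have hg1 : ContDiffOn ℝ 1 g s := hu.derivWithin hsu (by norm_num)
  have hgd : DifferentiableOn ℝ g s := hg1.differentiableOn one_ne_zero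
  have hcont2 : ContinuousOn (derivWithin g s) s := hg1.continuousOn_derivWithin hsu le_rfl
  have hinterior : ∀ x ∈ Set.Ioo (0:ℝ) T, |derivWithin g s x| ≤ M := by
    intro x hx
    have hnx : s ∈ nhds x := Icc_mem_nhds hx.1 hx.2
    have e1 : derivWithin g s x = deriv g x := derivWithin_of_mem_nhds hnx
    have heq : g =ᶠ[nhds x] deriv u := by
      filter_upwards [isOpen_Ioo.mem_nhds hx] with y hy
      exact derivWithin_of_mem_nhds (Icc_mem_nhds hy.1 hy.2)
    have e2 : deriv g x = deriv (deriv u) x := heq.deriv_eq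
    rw [e1, e2]
    exact hb x (Set.Ioo_subset_Icc_self hx)
  have hbound : ∀ x ∈ s, |derivWithin g s x| ≤ M := by
    intro x hx
    have hxc : x ∈ closure (Set.Ioo (0:ℝ) T) := by
      rw [closure_Ioo hT.ne]; exact hx
    have hne : (nhdsWithin x (Set.Ioo (0:ℝ) T)).NeBot :=
      mem_closure_iff_nhdsWithin_neBot.1 hxc
    have htend : Filter.Tendsto (fun y => |derivWithin g s y|) (nhdsWithin x (Set.Ioo (0:ℝ) T))
        (nhds |derivWithin g s x|) :=
      (((hcont2 x hx).mono Set.Ioo_subset_Icc_self)).abs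
    exact le_of_tendsto htend (Filter.eventually_iff_exists_mem.2
      ⟨Set.Ioo 0 T, self_mem_nhdsWithin, fun y hy => hinterior y hy⟩)
  intro x hx y hy
  have := (convex_Icc (0:ℝ) T).norm_image_sub_le_of_norm_derivWithin_le hgd
    (fun z hz => by simpa [Real.norm_eq_abs] using hbound z hz) hx hy
  simpa [Real.norm_eq_abs] using this

lemma l1_aux_ftc (T : ℝ) (hT : 0 < T) (u : ℝ → ℝ) (hu : ContDiffOn ℝ 2 u (Set.Icc 0 T))
    (a b : ℝ) (ha : 0 ≤ a) (hab : a ≤ b) (hbT : b ≤ T) :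
    ∫ x in a..b, derivWithin u (Set.Icc 0 T) x = u b - u a := by
  set s : Set ℝ := Set.Icc 0 T with hs
  have hsu : UniqueDiffOn ℝ s := uniqueDiffOn_Icc hT
  set g : ℝ → ℝ := derivWithin u s with hg
  have hg1 : ContDiffOn ℝ 1 g s := hu.derivWithin hsu (by norm_num)
  apply intervalIntegral.integral_eq_sub_of_hasDerivAt_of_le hab
    (hu.continuousOn.mono (Set.Icc_subset_Icc ha hbT))
  · intro x hx
    have hx' : x ∈ Set.Ioo (0:ℝ) T := ⟨lt_of_le_of_lt ha hx.1, lt_of_lt_of_le hx.2 hbT⟩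
    have hnx : s ∈ nhds x := Icc_mem_nhds hx'.1 hx'.2
    have hd : DifferentiableAt ℝ u x :=
      ((hu.differentiableOn (by norm_num)) x (Set.Ioo_subset_Icc_self hx')).differentiableAt hnx
    have : g x = deriv u x := derivWithin_of_mem_nhds hnx
    rw [this]
    exact hd.hasDerivAt
  · apply ContinuousOn.intervalIntegrable
    exact hg1.continuousOn.mono (by rw [Set.uIcc_of_le hab]; exact Set.Icc_subset_Icc ha hbT)

set_option maxHeartbeats 1000000 in
/-- Truncation error of the L1 approximation: `O(τ^(2-α))`, with a constant depending
only on `α`, `T` and a bound `M` on `|u''|`. -/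
theorem l1_truncation_error (α T M : ℝ) (hα0 : 0 < α) (hα1 : α < 1) (hT : 0 < T)
    (hM : 0 ≤ M) :
    ∃ C > 0, ∀ u : ℝ → ℝ, ContDiffOn ℝ 2 u (Set.Icc 0 T) →
      (∀ s ∈ Set.Icc (0 : ℝ) T, |deriv (deriv u) s| ≤ M) →
      ∀ N n : ℕ, 1 ≤ n → n ≤ N →
        |(1 / Real.Gamma (1 - α)) *
              (∫ η in (0 : ℝ)..((n : ℝ) * (T / N)),
                deriv u η * ((n : ℝ) * (T / N) - η) ^ (-α)) -
            (1 / Real.Gamma (1 - α)) *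
              ∑ k ∈ Finset.range n,
                ((u (((k : ℝ) + 1) * (T / N)) - u ((k : ℝ) * (T / N))) / (T / N)) *
                  ∫ s in ((k : ℝ) * (T / N))..(((k : ℝ) + 1) * (T / N)),
                    ((n : ℝ) * (T / N) - s) ^ (-α)| ≤
          C * (T / N) ^ (2 - α) := by
  have h1α : (0:ℝ) < 1 - α := by linarith
  have hΓ : 0 < Real.Gamma (1 - α) := Real.Gamma_pos_of_pos h1α
  refine ⟨(M + 1) * (1 + 1 / (1 - α)) / Real.Gamma (1 - α), by positivity, ?_⟩
  intro u hu hb N n hn hnN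
  have hN : 0 < (N:ℝ) := by exact_mod_cast lt_of_lt_of_le hn hnN
  set τ : ℝ := T / N with hτdef
  have hτ : 0 < τ := div_pos hT hN
  obtain ⟨m, rfl⟩ : ∃ m, n = m + 1 := ⟨n - 1, (Nat.succ_pred_eq_of_pos hn).symm⟩
  set n := m + 1 with hndef
  -- grid points
  set t : ℕ → ℝ := fun k => (k : ℝ) * τ with htdef
  have htstep : ∀ k : ℕ, t (k+1) - t k = τ := by
    intro k; simp only [htdef]; push_cast; ring
  have htmono : ∀ k : ℕ, t k ≤ t (k+1) := fun k => by
    have := htstep k; linarith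
  have ht0 : ∀ k : ℕ, 0 ≤ t k := fun k => by
    simp only [htdef]; positivity
  have htle : ∀ j k : ℕ, j ≤ k → t j ≤ t k := by
    intro j k hjk
    simp only [htdef]
    have : (j:ℝ) ≤ (k:ℝ) := by exact_mod_cast hjk
    nlinarith
  have hNτ : (N:ℝ) * τ = T := by
    rw [hτdef]; field_simp
  have htT : ∀ k : ℕ, k ≤ N → t k ≤ T := by
    intro k hk
    have : (k:ℝ) ≤ (N:ℝ) := by exact_mod_cast hk
    rw [← hNτ]; simp only [htdef]; nlinarith
  have htnT : t n ≤ T := htT n hnN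
  have hIccsub : ∀ k : ℕ, k < n → Set.Icc (t k) (t (k+1)) ⊆ Set.Icc 0 T := by
    intro k hk
    exact Set.Icc_subset_Icc (ht0 k) (le_trans (htle (k+1) n hk) htnT)
  have huIccsub : ∀ k : ℕ, k < n → Set.uIcc (t k) (t (k+1)) ⊆ Set.Icc 0 T := by
    intro k hk; rw [Set.uIcc_of_le (htmono k)]; exact hIccsub k hk
  -- kernel
  set K : ℝ → ℝ := fun η => (t n - η) ^ (-α) with hKdef
  have hKint : ∀ a b : ℝ, IntervalIntegrable K volume a b := by
    intro a b
    have h0 := intervalIntegrable_rpow' (a := t n - b) (b := t n - a) (r := -α) (by linarith)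
    have h1 := (h0.comp_sub_left (t n)).symm
    simpa [hKdef] using h1
  have hKnonneg : ∀ x ≤ t n, 0 ≤ K x := by
    intro x hx
    exact Real.rpow_nonneg (by linarith) _
  -- derivative
  set g : ℝ → ℝ := derivWithin u (Set.Icc 0 T) with hgdef
  have hsu : UniqueDiffOn ℝ (Set.Icc (0:ℝ) T) := uniqueDiffOn_Icc hT
  have hg1 : ContDiffOn ℝ 1 g (Set.Icc 0 T) := hu.derivWithin hsu (by norm_num)
  have hgcont : ContinuousOn g (Set.Icc 0 T) := hg1.continuousOn
  have hlip := l1_aux_lip T M hT u hu hb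
  have hgint : ∀ k : ℕ, k < n → IntervalIntegrable g volume (t k) (t (k+1)) := by
    intro k hk
    exact (hgcont.mono (huIccsub k hk)).intervalIntegrable
  have hint : ∀ k : ℕ, k < n →
      IntervalIntegrable (fun η => g η * K η) volume (t k) (t (k+1)) := by
    intro k hk
    exact (hKint _ _).continuousOn_mul (hgcont.mono (huIccsub k hk))
  have hFTC : ∀ k : ℕ, k < n → ∫ x in t k..t (k+1), g x = u (t (k+1)) - u (t k) := by
    intro k hk
    exact l1_aux_ftc T hT u hu _ _ (ht0 k) (htmono k) (le_trans (htle (k+1) n hk) htnT)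
  -- difference quotient
  set DQ : ℕ → ℝ := fun k => (u (t (k+1)) - u (t k)) / τ with hDQdef
  -- cancellation
  have hcancel : ∀ k : ℕ, k < n → ∫ x in t k..t (k+1), (g x - DQ k) = 0 := by
    intro k hk
    rw [intervalIntegral.integral_sub (hgint k hk) (intervalIntegrable_const),
      hFTC k hk, intervalIntegral.integral_const, htstep k, smul_eq_mul, hDQdef]
    field_simp
    ring
  -- pointwise bound |g η - DQ k| ≤ M τ
  have hDQb : ∀ k : ℕ, k < n → ∀ η ∈ Set.Icc (t k) (t (k+1)), |g η - DQ k| ≤ M * τ := by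
    intro k hk η hη
    have hmem : ∀ x ∈ Set.Icc (t k) (t (k+1)), x ∈ Set.Icc (0:ℝ) T :=
      fun x hx => hIccsub k hk hx
    have h1 : ∫ x in t k..t (k+1), (g η - g x) = τ * g η - (u (t (k+1)) - u (t k)) := by
      rw [intervalIntegral.integral_sub (intervalIntegrable_const) (hgint k hk),
        hFTC k hk, intervalIntegral.integral_const, htstep k, smul_eq_mul]
    have h2 : |∫ x in t k..t (k+1), (g η - g x)| ≤ (M * τ) * τ := by
      have := intervalIntegral.norm_integral_le_of_norm_le_const
        (C := M * τ) (f := fun x => g η - g x) (a := t k) (b := t (k+1)) ?_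
      · rw [Real.norm_eq_abs] at this
        calc |∫ x in t k..t (k+1), (g η - g x)| ≤ (M*τ) * |t (k+1) - t k| := this
          _ = (M*τ) * τ := by rw [htstep k, abs_of_pos hτ]
      · intro x hx
        have hx' : x ∈ Set.Icc (t k) (t (k+1)) := by
          rw [Set.uIoc_of_le (htmono k)] at hx
          exact Set.Ioc_subset_Icc_self hx
        have hd : |g η - g x| ≤ M * |η - x| := hlip x (hmem x hx') η (hmem η hη)
        have habs : |η - x| ≤ τ := by
          rw [abs_sub_le_iff]
          constructor <;> [skip; skip] <;>
            · have e := htstep k; obtain ⟨a1, a2⟩ := hη; obtain ⟨b1, b2⟩ := hx'; linarith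
        calc ‖g η - g x‖ = |g η - g x| := Real.norm_eq_abs _
          _ ≤ M * |η - x| := hd
          _ ≤ M * τ := by nlinarith
    have h3 : g η - DQ k = (∫ x in t k..t (k+1), (g η - g x)) / τ := by
      rw [h1, hDQdef]
      field_simp
    rw [h3, abs_div, abs_of_pos hτ, div_le_iff₀ hτ]
    exact h2
  -- E k = ∫ (g - DQ k) * K
  set E : ℕ → ℝ := fun k =>
    (∫ η in t k..t (k+1), g η * K η) - DQ k * ∫ x in t k..t (k+1), K x with hEdef
  have hEeq : ∀ k : ℕ, k < n →
      E k = ∫ η in t k..t (k+1), (g η - DQ k) * K η := by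
    intro k hk
    have i1 := hint k hk
    have i2 : IntervalIntegrable (fun η => DQ k * K η) volume (t k) (t (k+1)) :=
      (hKint _ _).const_mul _
    rw [hEdef]
    simp only [sub_mul]
    rw [intervalIntegral.integral_sub i1 i2, intervalIntegral.integral_const_mul]
  have hEeq2 : ∀ k : ℕ, k < n →
      E k = ∫ η in t k..t (k+1), (g η - DQ k) * (K η - K (t k)) := by
    intro k hk
    have hcont : ContinuousOn (fun η => g η - DQ k) (Set.uIcc (t k) (t (k+1))) :=
      (hgcont.mono (huIccsub k hk)).sub continuousOn_const
    have i1 : IntervalIntegrable (fun η => (g η - DQ k) * K η) volume (t k) (t (k+1)) :=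
      (hKint _ _).continuousOn_mul hcont
    have i2 : IntervalIntegrable (fun η => (g η - DQ k) * K (t k)) volume (t k) (t (k+1)) :=
      (hcont.intervalIntegrable).mul_const _
    have expand : ∀ η, (g η - DQ k) * (K η - K (t k))
        = (g η - DQ k) * K η - (g η - DQ k) * K (t k) := by intro η; ring
    simp only [expand]
    rw [intervalIntegral.integral_sub i1 i2, intervalIntegral.integral_mul_const,
      hcancel k hk, zero_mul, sub_zero, hEeq k hk]
  -- bound for k < m
  have hEb1 : ∀ k : ℕ, k < m → |E k| ≤ (M * τ * τ) * (K (t (k+1)) - K (t k)) := by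
    intro k hk
    have hk' : k < n := Nat.lt_succ_of_lt hk
    have hlt : t (k+1) < t n := by
      have : (k+1:ℕ) < n := Nat.succ_lt_succ hk
      have hc : ((k+1:ℕ):ℝ) + 1 ≤ (n:ℝ) := by exact_mod_cast this
      simp only [htdef]
      push_cast at hc ⊢
      nlinarith
    have hKmono : ∀ x ∈ Set.Icc (t k) (t (k+1)), K (t k) ≤ K x ∧ K x ≤ K (t (k+1)) := by
      intro x hx
      have hx2 : 0 < t n - t (k+1) := by linarith
      have hx1 : 0 < t n - x := by obtain ⟨_, h2⟩ := hx; linarith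
      constructor
      · apply Real.rpow_le_rpow_of_nonpos hx1 (by obtain ⟨h1, _⟩ := hx; linarith) (by linarith)
      · apply Real.rpow_le_rpow_of_nonpos hx2 (by obtain ⟨_, h2⟩ := hx; linarith) (by linarith)
    rw [hEeq2 k hk']
    have hb1 := intervalIntegral.norm_integral_le_of_norm_le_const
      (C := (M * τ) * (K (t (k+1)) - K (t k)))
      (f := fun η => (g η - DQ k) * (K η - K (t k))) (a := t k) (b := t (k+1)) ?_
    · rw [Real.norm_eq_abs] at hb1
      calc |∫ η in t k..t (k+1), (g η - DQ k) * (K η - K (t k))|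
          ≤ (M * τ) * (K (t (k+1)) - K (t k)) * |t (k+1) - t k| := hb1
        _ = (M * τ * τ) * (K (t (k+1)) - K (t k)) := by rw [htstep k, abs_of_pos hτ]; ring
    · intro x hx
      rw [Set.uIoc_of_le (htmono k)] at hx
      have hx' : x ∈ Set.Icc (t k) (t (k+1)) := Set.Ioc_subset_Icc_self hx
      have h1 := hDQb k hk' x hx'
      have h2 := hKmono x hx'
      have h3 : |K x - K (t k)| ≤ K (t (k+1)) - K (t k) := by
        rw [abs_of_nonneg (by linarith [h2.1])]; linarith [h2.2]
      rw [Real.norm_eq_abs, abs_mul]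
      apply mul_le_mul h1 h3 (abs_nonneg _) (by positivity)
  -- bound for last interval
  have hJm : ∫ x in t m..t n, K x = τ ^ (1 - α) / (1 - α) := by
    have h0 : ∫ x in t m..t n, K x = ∫ x in (t n - t n)..(t n - t m), x ^ (-α) := by
      rw [hKdef]
      exact intervalIntegral.integral_comp_sub_left (fun x => x ^ (-α)) (t n)
    rw [h0, sub_self]
    have hstep : t n - t m = τ := htstep m
    rw [hstep, integral_rpow (Or.inl (by linarith))]
    rw [Real.zero_rpow (by linarith), show -α + 1 = 1 - α by ring]
    ring
  have hEbm : |E m| ≤ (M * τ) * (τ ^ (1 - α) / (1 - α)) := by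
    have hm : m < n := Nat.lt_succ_self m
    rw [hEeq m hm]
    have hb2 : |∫ η in t m..t n, (g η - DQ m) * K η|
        ≤ |∫ η in t m..t n, (M * τ) * K η| := by
      have := intervalIntegral.norm_integral_le_abs_of_norm_le
        (f := fun η => (g η - DQ m) * K η) (g := fun η => (M * τ) * K η)
        (a := t m) (b := t n) (μ := volume) ?_ (((hKint _ _)).const_mul _)
      · simpa [Real.norm_eq_abs] using this
      · apply ae_restrict_of_forall_mem measurableSet_uIoc
        intro x hx
        rw [Set.uIoc_of_le (htmono m)] at hx
        have hx' : x ∈ Set.Icc (t m) (t n) := Set.Ioc_subset_Icc_self hx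
        have h1 := hDQb m hm x hx'
        have h2 : 0 ≤ K x := hKnonneg x hx'.2
        rw [Real.norm_eq_abs, abs_mul, abs_of_nonneg h2]
        exact mul_le_mul_of_nonneg_right h1 h2
    have hval : ∫ η in t m..t n, (M * τ) * K η = (M * τ) * (τ ^ (1 - α) / (1 - α)) := by
      rw [intervalIntegral.integral_const_mul, hJm]
    calc |∫ η in t m..t n, (g η - DQ m) * K η|
        ≤ |∫ η in t m..t n, (M * τ) * K η| := hb2
      _ = (M * τ) * (τ ^ (1 - α) / (1 - α)) := by
          rw [hval, abs_of_nonneg (by positivity)]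
  -- telescoping sum of the kernel increments
  have htele : ∑ k ∈ Finset.range m, (K (t (k+1)) - K (t k)) = K (t m) - K (t 0) :=
    Finset.sum_range_sub (fun k => K (t k)) m
  have hKtm : K (t m) = τ ^ (-α) := by
    simp only [hKdef]
    rw [show t n - t m = τ from htstep m]
  -- total bound on the sum of errors
  have hsum : |∑ k ∈ Finset.range n, E k| ≤ M * (1 + 1 / (1 - α)) * τ ^ (2 - α) := by
    have e1 : τ * τ * τ ^ (-α) = τ ^ (2 - α) := by
      rw [show (2 - α : ℝ) = 1 + 1 + -α by ring, Real.rpow_add hτ, Real.rpow_add hτ,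
        Real.rpow_one]
    have e2 : τ * τ ^ (1 - α) = τ ^ (2 - α) := by
      rw [show (2 - α : ℝ) = 1 + (1 - α) by ring, Real.rpow_add hτ, Real.rpow_one]
    have h1 : |∑ k ∈ Finset.range n, E k| ≤ ∑ k ∈ Finset.range n, |E k| :=
      Finset.abs_sum_le_sum_abs _ _
    have h2 : ∑ k ∈ Finset.range n, |E k| = (∑ k ∈ Finset.range m, |E k|) + |E m| := by
      rw [hndef, Finset.sum_range_succ]
    have h3 : ∑ k ∈ Finset.range m, |E k| ≤ M * τ ^ (2 - α) := by
      calc ∑ k ∈ Finset.range m, |E k|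
          ≤ ∑ k ∈ Finset.range m, (M * τ * τ) * (K (t (k+1)) - K (t k)) :=
            Finset.sum_le_sum (fun k hk => hEb1 k (Finset.mem_range.1 hk))
        _ = (M * τ * τ) * (K (t m) - K (t 0)) := by rw [← Finset.mul_sum, htele]
        _ ≤ (M * τ * τ) * K (t m) := by
            have h0 : 0 ≤ K (t 0) := hKnonneg _ (htle 0 n (Nat.zero_le n))
            have : 0 ≤ M * τ * τ := by positivity
            nlinarith
        _ = M * τ ^ (2 - α) := by rw [hKtm, mul_assoc, mul_assoc, ← mul_assoc τ τ _, e1]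
    have h4 : |E m| ≤ M / (1 - α) * τ ^ (2 - α) := by
      calc |E m| ≤ (M * τ) * (τ ^ (1 - α) / (1 - α)) := hEbm
        _ = M / (1 - α) * (τ * τ ^ (1 - α)) := by ring
        _ = M / (1 - α) * τ ^ (2 - α) := by rw [e2]
    calc |∑ k ∈ Finset.range n, E k| ≤ ∑ k ∈ Finset.range n, |E k| := h1
      _ = (∑ k ∈ Finset.range m, |E k|) + |E m| := h2
      _ ≤ M * τ ^ (2 - α) + M / (1 - α) * τ ^ (2 - α) := add_le_add h3 h4
      _ = M * (1 + 1 / (1 - α)) * τ ^ (2 - α) := by ring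
  -- rewrite the goal as (1/Γ) * |∑ E k|
  have hA : (∫ η in (0:ℝ)..((n : ℝ) * τ), deriv u η * ((n : ℝ) * τ - η) ^ (-α))
      = ∑ k ∈ Finset.range n, ∫ η in t k..t (k+1), g η * K η := by
    have hsplit : ∑ k ∈ Finset.range n, ∫ η in t k..t (k+1), g η * K η
        = ∫ η in (t 0)..(t n), g η * K η :=
      intervalIntegral.sum_integral_adjacent_intervals (fun k hk => hint k hk)
    have ht00 : t 0 = 0 := by simp [htdef]
    have hcongr : (∫ η in (0:ℝ)..(t n), deriv u η * K η)
        = ∫ η in (0:ℝ)..(t n), g η * K η := by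
      apply intervalIntegral.integral_congr_ae
      apply Filter.Eventually.of_forall
      intro x hx
      rw [Set.uIoc_of_le (by rw [← ht00]; exact htle 0 n (Nat.zero_le n))] at hx
      rcases lt_or_ge x T with hxT | hxT
      · have hx' : x ∈ Set.Ioo (0:ℝ) T := ⟨hx.1, hxT⟩
        have heq : deriv u x = g x :=
          (derivWithin_of_mem_nhds (Icc_mem_nhds hx'.1 hx'.2)).symm
        show deriv u x * K x = g x * K x
        rw [heq]
      · have hxeq : x = t n := le_antisymm hx.2 (le_trans htnT hxT)
        have : K x = 0 := by
          simp only [hKdef, hxeq, sub_self]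
          exact Real.zero_rpow (by linarith)
        simp only [hKdef] at this ⊢
        rw [this, mul_zero, mul_zero]
    rw [hsplit, ht00]
    exact hcongr
  have hB : (∑ k ∈ Finset.range n,
        ((u (((k : ℝ) + 1) * τ) - u ((k : ℝ) * τ)) / τ) *
          ∫ s in ((k : ℝ) * τ)..(((k : ℝ) + 1) * τ), ((n : ℝ) * τ - s) ^ (-α))
      = ∑ k ∈ Finset.range n, DQ k * ∫ x in t k..t (k+1), K x := by
    apply Finset.sum_congr rfl
    intro k _
    have hc : ((k : ℝ) + 1) = ((k + 1 : ℕ) : ℝ) := by push_cast; ring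
    rw [hc]
  have hfinal : (1 / Real.Gamma (1 - α)) *
        (∫ η in (0:ℝ)..((n : ℝ) * τ), deriv u η * ((n : ℝ) * τ - η) ^ (-α)) -
      (1 / Real.Gamma (1 - α)) *
        ∑ k ∈ Finset.range n,
          ((u (((k : ℝ) + 1) * τ) - u ((k : ℝ) * τ)) / τ) *
            ∫ s in ((k : ℝ) * τ)..(((k : ℝ) + 1) * τ), ((n : ℝ) * τ - s) ^ (-α)
      = (1 / Real.Gamma (1 - α)) * ∑ k ∈ Finset.range n, E k := by
    rw [hA, hB, ← mul_sub, ← Finset.sum_sub_distrib]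
  rw [hfinal, abs_mul, abs_of_pos (by positivity : (0:ℝ) < 1 / Real.Gamma (1 - α))]
  have hX : (0:ℝ) ≤ τ ^ (2 - α) := Real.rpow_nonneg hτ.le _
  calc (1 / Real.Gamma (1 - α)) * |∑ k ∈ Finset.range n, E k|
      ≤ (1 / Real.Gamma (1 - α)) * (M * (1 + 1 / (1 - α)) * τ ^ (2 - α)) := by
        apply mul_le_mul_of_nonneg_left hsum (by positivity)
    _ ≤ (M + 1) * (1 + 1 / (1 - α)) / Real.Gamma (1 - α) * τ ^ (2 - α) := by
        rw [show (1 / Real.Gamma (1-α)) * (M * (1 + 1/(1-α)) * τ^(2-α))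
            = M * (1 + 1/(1-α)) * τ^(2-α) / Real.Gamma (1-α) by ring,
          show (M + 1) * (1 + 1/(1-α)) / Real.Gamma (1-α) * τ^(2-α)
            = (M+1) * (1 + 1/(1-α)) * τ^(2-α) / Real.Gamma (1-α) by ring]
        have hB' : (0:ℝ) < 1 + 1/(1-α) := by positivity
        apply (div_le_div_iff_of_pos_right hΓ).2
        nlinarith [hX]
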